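/- Let D be a digraph and let (R_i)_{i∈I} be a family of pairwise disjoint equivalent out-rays such that for any two indices i, j with an edge i→j in the auxiliary graph D^∞(I) there are infinitely many pairwise disjoint R_i–R_j paths internally disjoint from the union of all rays. Then for every finite vertex set X ⊆ V(D) and every sequence i_1, …, i_n of distinct indices with infinitely many disjoint R_{i_k}–R_{i_{k+1}} paths (internally disjoint from the rays) for each k, there exists a directed path P in D avoiding X which is a concatenation P_1 Q_2 P_2 Q_3 ⋯ Q_{n−1} P_{n−1}, where each P_k is an R_{i_k}–R_{i_{k+1}} path internally disjoint from all rays of the family and each Q_k is a non-trivial subpath of R_{i_k}. -/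

import Mathlib

variable {V : Type*}

/-- An out-ray: a one-way infinite directed path oriented away from its start. -/
def IsOutRay (D : Digraph V) (f : ℕ → V) : Prop :=
  Function.Injective f ∧ ∀ n, D.Adj (f n) (f (n + 1))

/-- An in-ray: a one-way infinite directed path oriented towards its start. -/
def IsInRay (D : Digraph V) (f : ℕ → V) : Prop :=
  Function.Injective f ∧ ∀ n, D.Adj (f (n + 1)) (f n)

/-- A finite directed path, given as a nonempty duplicate-free list of vertices. -/
def IsDipath (D : Digraph V) (p : List V) : Prop :=
  p ≠ [] ∧ p.Nodup ∧ p.Chain' D.Adj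

def StartsIn (p : List V) (A : Set V) : Prop := ∃ a ∈ A, p.head? = some a

def EndsIn (p : List V) (B : Set V) : Prop := ∃ b ∈ B, p.getLast? = some b

def ListsDisjoint (p q : List V) : Prop := ∀ v ∈ p, v ∉ q

/-- There are infinitely many pairwise disjoint directed A–B paths. -/
def ManyDisjointPaths (D : Digraph V) (A B : Set V) : Prop :=
  ∃ P : ℕ → List V,
    (∀ n, IsDipath D (P n) ∧ StartsIn (P n) A ∧ EndsIn (P n) B) ∧
    ∀ m n, m ≠ n → ListsDisjoint (P m) (P n)

/-- Two rays are equivalent: infinitely many disjoint paths in both directions. -/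
def EquivRays (D : Digraph V) (R₁ R₂ : ℕ → V) : Prop :=
  ManyDisjointPaths D (Set.range R₁) (Set.range R₂) ∧
  ManyDisjointPaths D (Set.range R₂) (Set.range R₁)

/-- The internal vertices of a path. -/
def Internals (p : List V) : List V := p.tail.dropLast

def InternallyAvoids (p : List V) (U : Set V) : Prop := ∀ v ∈ Internals p, v ∉ U

/-- Infinitely many pairwise disjoint `A`–`B` paths whose internal vertices avoid `U`. -/
def ManyDisjointPathsAvoiding (D : Digraph V) (A B U : Set V) : Prop :=
  ∃ P : ℕ → List V,
    (∀ n, IsDipath D (P n) ∧ StartsIn (P n) A ∧ EndsIn (P n) B ∧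
      InternallyAvoids (P n) U) ∧
    ∀ m n, m ≠ n → ListsDisjoint (P m) (P n)

/-- The union of the vertex sets of a family of rays. -/
def RaysUnion {I : Type*} (R : I → ℕ → V) : Set V := ⋃ i, Set.range (R i)

/-- A non-trivial finite segment of a ray `R`, from position `s` to position `t`. -/
def IsRaySegment (R : ℕ → V) (q : List V) : Prop :=
  ∃ s t : ℕ, s < t ∧ q = (List.range (t - s + 1)).map fun m => R (s + m)

/-- `L` is a staircase for the sequence of ray-indices `seq`: a concatenation
`P₀ Q₁ P₁ ⋯ Q_{n-1} P_{n-1}` where `P k` is an `R (seq k)`–`R (seq (k+1))` path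
internally disjoint from all rays and each `Q k` (for `k ≥ 1`) is a non-trivial
segment of `R (seq k)`. -/
def IsStaircase {I : Type*} (D : Digraph V) (R : I → ℕ → V) {n : ℕ}
    (seq : Fin (n + 1) → I) (L : List V) : Prop :=
  ∃ P Q : Fin n → List V,
    (∀ k : Fin n, IsDipath D (P k) ∧
      StartsIn (P k) (Set.range (R (seq k.castSucc))) ∧
      EndsIn (P k) (Set.range (R (seq k.succ))) ∧
      InternallyAvoids (P k) (RaysUnion R)) ∧
    (∀ k : Fin n, 1 ≤ k.val → IsRaySegment (R (seq k.castSucc)) (Q k)) ∧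
    (∀ k : Fin n, ∀ h : 1 ≤ k.val,
      (P ⟨k.val - 1, by omega⟩).getLast? = (Q k).head? ∧
      (Q k).getLast? = (P k).head?) ∧
    L = (List.ofFn fun k : Fin n =>
      if k.val = 0 then P k else (Q k).tail ++ (P k).tail).flatten ∧
    IsDipath D L


section Helpers

open List

private lemma mem_path_cases' {p : List V} {v : V} (h : v ∈ p) :
    p.head? = some v ∨ p.getLast? = some v ∨ v ∈ Internals p := by
  match p with
  | [] => simp at h
  | a :: rest =>
    rcases List.mem_cons.1 h with rfl | hv
    · exact Or.inl rfl
    · have hne : rest ≠ [] := List.ne_nil_of_mem hv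
      rw [← List.dropLast_append_getLast hne] at hv
      rcases List.mem_append.1 hv with h1 | h1
      · exact Or.inr (Or.inr h1)
      · refine Or.inr (Or.inl ?_)
        simp only [List.mem_singleton] at h1
        rw [List.getLast?_eq_getLast (List.cons_ne_nil a rest), List.getLast_cons hne, ← h1]

private def seg (R : ℕ → V) (s t : ℕ) : List V :=
  (List.range (t - s + 1)).map fun m => R (s + m)

private lemma seg_ne_nil (R : ℕ → V) (s t : ℕ) : seg R s t ≠ [] := by
  simp [seg, List.range_succ]

private lemma mem_seg {R : ℕ → V} {s t : ℕ} (hst : s ≤ t) {v : V} (h : v ∈ seg R s t) :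
    ∃ m, s ≤ m ∧ m ≤ t ∧ v = R m := by
  simp only [seg, List.mem_map, List.mem_range] at h
  obtain ⟨a, ha, rfl⟩ := h
  exact ⟨s + a, by omega, by omega, rfl⟩

private lemma seg_head? (R : ℕ → V) (s t : ℕ) : (seg R s t).head? = some (R s) := by
  simp [seg, List.range_succ_eq_map]

private lemma seg_getLast? {R : ℕ → V} {s t : ℕ} (hst : s ≤ t) :
    (seg R s t).getLast? = some (R t) := by
  have h1 : s + (t - s) = t := by omega
  rw [seg, List.range_succ, List.map_append, List.map_singleton, List.getLast?_concat, h1]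

private lemma seg_nodup {R : ℕ → V} (hR : Function.Injective R) (s t : ℕ) :
    (seg R s t).Nodup :=
  List.Nodup.map (fun a b hab => by have := hR hab; omega) List.nodup_range

private lemma seg_chain' {D : Digraph V} {R : ℕ → V} (hR : ∀ n, D.Adj (R n) (R (n + 1)))
    (s t : ℕ) : (seg R s t).Chain' D.Adj := by
  unfold List.Chain'
  rw [seg, List.isChain_map, show t - s + 1 = (t - s).succ from rfl, List.isChain_range_succ]
  intro m hm
  exact hR (s + m)

private lemma seg_tail {R : ℕ → V} {s t : ℕ} (h : s < t) :
    (seg R s t).tail = seg R (s + 1) t := by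
  have h2 : t - (s + 1) + 1 = t - s := by omega
  rw [seg, seg, h2, List.range_succ_eq_map, List.map_cons, List.tail_cons, List.map_map]
  have h3 : ((fun m => R (s + m)) ∘ Nat.succ) = fun m => R (s + 1 + m) :=
    funext fun m => congrArg R (by omega)
  rw [h3]

private lemma getLast?_tail_of_ne {l : List V} (h : l.tail ≠ []) :
    l.tail.getLast? = l.getLast? := by
  match l with
  | [] => simp at h
  | a :: r =>
    simp only [List.tail_cons] at h ⊢
    rw [List.getLast?_eq_getLast h, List.getLast?_eq_getLast (List.cons_ne_nil a r),
      List.getLast_cons h]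

/-- Selection lemma: from infinitely many disjoint paths, pick one avoiding a finite set,
with start position beyond `s₀` and end position at least `t₀`. -/
private lemma select_path {I : Type*} (D : Digraph V) (R : I → ℕ → V) (i j : I)
    (hri : Function.Injective (R i)) (hrj : Function.Injective (R j))
    (hij : ManyDisjointPathsAvoiding D (Set.range (R i)) (Set.range (R j)) (RaysUnion R))
    (F : Set V) (hF : F.Finite) (s₀ t₀ : ℕ) :
    ∃ (p : List V) (s t : ℕ), IsDipath D p ∧ p.head? = some (R i s) ∧
      p.getLast? = some (R j t) ∧ InternallyAvoids p (RaysUnion R) ∧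
      (∀ v ∈ p, v ∉ F) ∧ s₀ < s ∧ t₀ ≤ t := by
  obtain ⟨P, hP, hd⟩ := hij
  have hs : ∀ n, ∃ m, (P n).head? = some (R i m) := by
    intro n
    obtain ⟨a, ⟨m, hm⟩, ha⟩ := (hP n).2.1
    exact ⟨m, by rw [ha, hm]⟩
  have ht : ∀ n, ∃ m, (P n).getLast? = some (R j m) := by
    intro n
    obtain ⟨a, ⟨m, hm⟩, ha⟩ := (hP n).2.2.1
    exact ⟨m, by rw [ha, hm]⟩
  choose sPos hsPos using hs
  choose tPos htPos using ht
  have hmemS : ∀ n, R i (sPos n) ∈ P n := fun n =>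
    List.mem_of_mem_head? (by rw [hsPos n]; exact rfl)
  have hmemT : ∀ n, R j (tPos n) ∈ P n := fun n =>
    List.mem_of_mem_getLast? (by rw [htPos n]; exact rfl)
  have hinjS : Function.Injective sPos := by
    intro m n h
    by_contra hne
    exact hd m n hne _ (hmemS m) (by rw [h]; exact hmemS n)
  have hinjT : Function.Injective tPos := by
    intro m n h
    by_contra hne
    exact hd m n hne _ (hmemT m) (by rw [h]; exact hmemT n)
  have hbad : ({n | ∃ v ∈ F, v ∈ P n} ∪ (sPos ⁻¹' Set.Iic s₀ ∪ tPos ⁻¹' Set.Iio t₀)).Finite := by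
    refine Set.Finite.union ?_ (Set.Finite.union ?_ ?_)
    · have hsub : {n | ∃ v ∈ F, v ∈ P n} ⊆ ⋃ v ∈ F, {n | v ∈ P n} := by
        rintro n ⟨v, hv, h⟩
        exact Set.mem_biUnion hv h
      refine Set.Finite.subset (Set.Finite.biUnion hF fun v _ => ?_) hsub
      refine Set.Subsingleton.finite ?_
      intro a ha b hb
      by_contra hne
      exact hd a b hne v ha hb
    · exact Set.Finite.preimage hinjS.injOn (Set.finite_Iic s₀)
    · exact Set.Finite.preimage hinjT.injOn (Set.finite_Iio t₀)
  obtain ⟨n, hn⟩ := hbad.infinite_compl.nonempty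
  simp only [Set.mem_compl_iff, Set.mem_union, Set.mem_setOf_eq, Set.mem_preimage,
    Set.mem_Iic, Set.mem_Iio, not_or, not_exists, not_and, not_le, not_lt] at hn
  obtain ⟨h1, h2, h3⟩ := hn
  exact ⟨P n, sPos n, tPos n, (hP n).1, hsPos n, htPos n, (hP n).2.2.2,
    fun v hv hvF => h1 v hvF hv, h2, h3⟩

/-- Inductive construction of the crossing paths. -/
private lemma build_paths {I : Type*} (D : Digraph V) (R : I → ℕ → V)
    (hray : ∀ i, IsOutRay D (R i)) (X : Set V) (hX : X.Finite)
    (n : ℕ) (seq : Fin (n + 1) → I)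
    (hedge : ∀ k : Fin n, ManyDisjointPathsAvoiding D
      (Set.range (R (seq k.castSucc))) (Set.range (R (seq k.succ))) (RaysUnion R))
    (N : ℕ) :
    ∀ k, ∀ hk : k ≤ n, ∃ (p : Fin k → List V) (s t : Fin k → ℕ),
      (∀ j : Fin k, IsDipath D (p j) ∧
        (p j).head? = some (R (seq (Fin.castLE hk j).castSucc) (s j)) ∧
        (p j).getLast? = some (R (seq (Fin.castLE hk j).succ) (t j)) ∧
        InternallyAvoids (p j) (RaysUnion R) ∧
        (∀ v ∈ p j, v ∉ X) ∧ N ≤ t j) ∧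
      (∀ j l : Fin k, j ≠ l → ListsDisjoint (p j) (p l)) ∧
      (∀ j : Fin k, ∀ h0 : 0 < j.val, t ⟨j.val - 1, by omega⟩ < s j) := by
  intro k
  induction k with
  | zero =>
    intro hk
    exact ⟨Fin.elim0, Fin.elim0, Fin.elim0, fun j => j.elim0, fun j => j.elim0,
      fun j => j.elim0⟩
  | succ k ih =>
    intro hk1
    have hk : k ≤ n := Nat.le_of_succ_le hk1
    obtain ⟨p, s, t, H1, H2, H3⟩ := ih hk
    have hkn : k < n := hk1
    set kn : Fin n := ⟨k, hkn⟩ with hkn_def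
    set F : Set V := X ∪ ⋃ j : Fin k, {v | v ∈ p j} with hF_def
    have hF : F.Finite :=
      hX.union (Set.finite_iUnion fun j => (p j).finite_toSet)
    set s₀ : ℕ := if h : 0 < k then t ⟨k - 1, by omega⟩ else 0 with hs₀_def
    obtain ⟨q, sq, tq, hq1, hq2, hq3, hq4, hq5, hq6, hq7⟩ :=
      select_path D R (seq kn.castSucc) (seq kn.succ) (hray _).1 (hray _).1
        (hedge kn) F hF s₀ N
    refine ⟨Fin.snoc p q, Fin.snoc s sq, Fin.snoc t tq, ?_, ?_, ?_⟩
    · intro j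
      refine Fin.lastCases ?_ ?_ j
      · have e1 : Fin.castLE hk1 (Fin.last k) = kn := rfl
        simp only [Fin.snoc_last, e1]
        exact ⟨hq1, hq2, hq3, hq4, fun v hv => fun hvX => hq5 v hv (Or.inl hvX), hq7⟩
      · intro j0
        have e2 : Fin.castLE hk1 j0.castSucc = Fin.castLE hk j0 := rfl
        simp only [Fin.snoc_castSucc, e2]
        exact H1 j0
    · have hsnp : ∀ (m : ℕ) (hm : m < k) (hm' : m < k + 1),
          (Fin.snoc p q : Fin (k + 1) → List V) ⟨m, hm'⟩ = p ⟨m, hm⟩ := fun m hm hm' => by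
        rw [show (⟨m, hm'⟩ : Fin (k + 1)) = (⟨m, hm⟩ : Fin k).castSucc from Fin.ext rfl,
          Fin.snoc_castSucc]
      have hsnl : ∀ h : k < k + 1, (Fin.snoc p q : Fin (k + 1) → List V) ⟨k, h⟩ = q := fun h => by
        rw [show (⟨k, h⟩ : Fin (k + 1)) = Fin.last k from Fin.ext rfl, Fin.snoc_last]
      intro j l hjl
      rcases j with ⟨jv, hjv⟩
      rcases l with ⟨lv, hlv⟩
      by_cases hjk : jv < k <;> by_cases hlk : lv < k
      · rw [hsnp jv hjk hjv, hsnp lv hlk hlv]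
        exact H2 _ _ (fun h => hjl (Fin.ext (show jv = lv from congrArg Fin.val h)))
      · have hlv' : lv = k := by omega
        subst hlv'
        rw [hsnp jv hjk hjv, hsnl hlv]
        intro v hv hvq
        exact hq5 v hvq (Or.inr (Set.mem_iUnion.2 ⟨⟨jv, hjk⟩, hv⟩))
      · have hjv' : jv = k := by omega
        subst hjv'
        rw [hsnl hjv, hsnp lv hlk hlv]
        intro v hv hvl
        exact hq5 v hv (Or.inr (Set.mem_iUnion.2 ⟨⟨lv, hlk⟩, hvl⟩))
      · exact absurd (Fin.ext (show jv = lv by omega)) hjl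
    · have hsns : ∀ (m : ℕ) (hm : m < k) (hm' : m < k + 1),
          (Fin.snoc s sq : Fin (k + 1) → ℕ) ⟨m, hm'⟩ = s ⟨m, hm⟩ := fun m hm hm' => by
        rw [show (⟨m, hm'⟩ : Fin (k + 1)) = (⟨m, hm⟩ : Fin k).castSucc from Fin.ext rfl,
          Fin.snoc_castSucc]
      have hsnt : ∀ (m : ℕ) (hm : m < k) (hm' : m < k + 1),
          (Fin.snoc t tq : Fin (k + 1) → ℕ) ⟨m, hm'⟩ = t ⟨m, hm⟩ := fun m hm hm' => by
        rw [show (⟨m, hm'⟩ : Fin (k + 1)) = (⟨m, hm⟩ : Fin k).castSucc from Fin.ext rfl,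
          Fin.snoc_castSucc]
      have hsnsl : ∀ h : k < k + 1, (Fin.snoc s sq : Fin (k + 1) → ℕ) ⟨k, h⟩ = sq := fun h => by
        rw [show (⟨k, h⟩ : Fin (k + 1)) = Fin.last k from Fin.ext rfl, Fin.snoc_last]
      rintro ⟨jv, hjv⟩ h0
      simp only at h0
      by_cases hjk : jv < k
      · rw [hsns jv hjk hjv, hsnt (jv - 1) (by omega) (by omega)]
        exact H3 ⟨jv, hjk⟩ h0
      · have hjv' : jv = k := by omega
        subst hjv'
        rw [hsnsl hjv, hsnt (jv - 1) (by omega) (by omega)]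
        have h6 : s₀ < sq := hq6
        rw [hs₀_def, dif_pos h0] at h6
        exact h6

end Helpers

/-- Proposition 2.3: staircases avoiding any finite vertex set exist along any sequence
of distinct indices consecutive in `D^∞(I)`. -/
theorem stmt6 {I : Type*} (D : Digraph V) (R : I → ℕ → V)
    (hray : ∀ i, IsOutRay D (R i))
    (hdisj : ∀ i j, i ≠ j → ∀ n m, R i n ≠ R j m)
    (hequiv : ∀ i j, i ≠ j → EquivRays D (R i) (R j))
    (X : Set V) (hX : X.Finite)
    (n : ℕ) (hn : 1 ≤ n) (seq : Fin (n + 1) → I) (hinj : Function.Injective seq)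
    (hedge : ∀ k : Fin n, ManyDisjointPathsAvoiding D
      (Set.range (R (seq k.castSucc))) (Set.range (R (seq k.succ))) (RaysUnion R)) :
    ∃ L : List V, IsStaircase D R seq L ∧ ∀ v ∈ L, v ∉ X := by
  classical
  have hRinj : ∀ i, Function.Injective (R i) := fun i => (hray i).1
  have hRadj : ∀ i m, D.Adj (R i m) (R i (m + 1)) := fun i => (hray i).2
  -- a bound beyond which the relevant rays avoid X
  have hSfin : {m : ℕ | ∃ k : Fin (n + 1), R (seq k) m ∈ X}.Finite := by
    have hsub : {m : ℕ | ∃ k : Fin (n + 1), R (seq k) m ∈ X} ⊆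
        ⋃ k : Fin (n + 1), (R (seq k)) ⁻¹' X := by
      rintro m ⟨k, hk⟩
      exact Set.mem_iUnion.2 ⟨k, hk⟩
    exact Set.Finite.subset
      (Set.finite_iUnion fun k => Set.Finite.preimage (hRinj _).injOn hX) hsub
  obtain ⟨b, hb⟩ := hSfin.bddAbove
  have hNX : ∀ m, b + 1 ≤ m → ∀ k : Fin (n + 1), R (seq k) m ∉ X := by
    intro m hm k hx
    have : m ≤ b := hb ⟨k, hx⟩
    omega
  obtain ⟨p, s, t, H1, H2, H3⟩ :=
    build_paths D R hray X hX n seq hedge (b + 1) n le_rfl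
  have hcast : ∀ j : Fin n, Fin.castLE (le_refl n) j = j := fun j => Fin.ext rfl
  have hH1 : ∀ j : Fin n, IsDipath D (p j) ∧
      (p j).head? = some (R (seq j.castSucc) (s j)) ∧
      (p j).getLast? = some (R (seq j.succ) (t j)) ∧
      InternallyAvoids (p j) (RaysUnion R) ∧
      (∀ v ∈ p j, v ∉ X) ∧ b + 1 ≤ t j := by
    intro j
    have := H1 j
    rwa [hcast] at this
  have hPdi : ∀ j, IsDipath D (p j) := fun j => (hH1 j).1
  have hPhead : ∀ j, (p j).head? = some (R (seq j.castSucc) (s j)) := fun j => (hH1 j).2.1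
  have hPlast : ∀ j, (p j).getLast? = some (R (seq j.succ) (t j)) := fun j => (hH1 j).2.2.1
  have hPint : ∀ j, InternallyAvoids (p j) (RaysUnion R) := fun j => (hH1 j).2.2.2.1
  have hPX : ∀ j, ∀ v ∈ p j, v ∉ X := fun j => (hH1 j).2.2.2.2.1
  have hPt : ∀ j, b + 1 ≤ t j := fun j => (hH1 j).2.2.2.2.2
  have hts : ∀ k : Fin n, 1 ≤ k.val →
      t ⟨k.val - 1, lt_of_le_of_lt (Nat.sub_le _ _) k.isLt⟩ < s k := fun k h => H3 k h
  -- the ray segments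
  set Q : Fin n → List V := fun k =>
    if h : 1 ≤ k.val then
      seg (R (seq k.castSucc)) (t ⟨k.val - 1, lt_of_le_of_lt (Nat.sub_le _ _) k.isLt⟩) (s k)
    else [] with hQ_def
  have hQeq : ∀ k : Fin n, 1 ≤ k.val → Q k =
      seg (R (seq k.castSucc)) (t ⟨k.val - 1, lt_of_le_of_lt (Nat.sub_le _ _) k.isLt⟩)
        (s k) := fun k h => dif_pos h
  -- membership analysis: a path vertex on a segment
  have hPQ : ∀ (j k : Fin n), 1 ≤ k.val → ∀ v : V, v ∈ p j → v ∈ Q k →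
      (j = k ∧ v = R (seq k.castSucc) (s k)) ∨
      (j.val = k.val - 1 ∧
        v = R (seq k.castSucc) (t ⟨k.val - 1, lt_of_le_of_lt (Nat.sub_le _ _) k.isLt⟩)) := by
    intro j k hk v hvp hvq
    rw [hQeq k hk] at hvq
    obtain ⟨m, hm1, hm2, rfl⟩ := mem_seg (le_of_lt (hts k hk)) hvq
    rcases mem_path_cases' hvp with hh | hh | hh
    · have h2 := hPhead j
      rw [hh] at h2
      have e : R (seq k.castSucc) m = R (seq j.castSucc) (s j) := Option.some.inj h2
      by_cases hij : seq j.castSucc = seq k.castSucc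
      · have hjk : j = k := Fin.castSucc_inj.1 (hinj hij)
        subst hjk
        rw [hij] at e
        have : m = s j := hRinj _ e
        subst this
        exact Or.inl ⟨rfl, rfl⟩
      · exact absurd e.symm (hdisj _ _ hij _ _)
    · have h2 := hPlast j
      rw [hh] at h2
      have e : R (seq k.castSucc) m = R (seq j.succ) (t j) := Option.some.inj h2
      by_cases hij : seq j.succ = seq k.castSucc
      · have hjk : j.succ = k.castSucc := hinj hij
        have hval : j.val + 1 = k.val := by
          have := congrArg Fin.val hjk
          simpa using this
        have hjeq : j = ⟨k.val - 1, lt_of_le_of_lt (Nat.sub_le _ _) k.isLt⟩ :=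
          Fin.ext (show j.val = k.val - 1 by omega)
        rw [hij] at e
        have : m = t j := hRinj _ e
        subst this
        refine Or.inr ⟨show j.val = k.val - 1 by omega, ?_⟩
        rw [← hjeq]
      · exact absurd e.symm (hdisj _ _ hij _ _)
    · exact absurd (Set.mem_iUnion.2 ⟨seq k.castSucc, Set.mem_range_self m⟩) (hPint j _ hh)
  -- segments on distinct rays are disjoint
  have hQQ : ∀ j k : Fin n, j ≠ k → 1 ≤ j.val → 1 ≤ k.val → ∀ v ∈ Q j, v ∉ Q k := by
    intro j k hjk hj hk v hvj hvk
    rw [hQeq j hj] at hvj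
    rw [hQeq k hk] at hvk
    obtain ⟨m1, _, _, rfl⟩ := mem_seg (le_of_lt (hts j hj)) hvj
    obtain ⟨m2, _, _, he⟩ := mem_seg (le_of_lt (hts k hk)) hvk
    exact hdisj (seq j.castSucc) (seq k.castSucc)
      (fun h => hjk (Fin.castSucc_inj.1 (hinj h))) m1 m2 he
  -- segments avoid X
  have hQX : ∀ k : Fin n, 1 ≤ k.val → ∀ v ∈ Q k, v ∉ X := by
    intro k hk v hv
    rw [hQeq k hk] at hv
    obtain ⟨m, hm1, hm2, rfl⟩ := mem_seg (le_of_lt (hts k hk)) hv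
    exact hNX m (le_trans (hPt _) hm1) k.castSucc
  -- each path has at least two vertices
  have hsc : ∀ k : Fin n, seq k.castSucc ≠ seq k.succ := by
    intro k h
    have h2 := congrArg Fin.val (hinj h)
    simp at h2
  have hPtail_ne : ∀ k : Fin n, (p k).tail ≠ [] := by
    intro k hnil
    rcases hp : p k with _ | ⟨a, l⟩
    · exact (hPdi k).1 hp
    · rw [hp] at hnil
      simp only [List.tail_cons] at hnil
      subst hnil
      have h1 := hPhead k
      have h2 := hPlast k
      rw [hp] at h1 h2
      simp only [List.head?_cons, List.getLast?_singleton] at h1 h2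
      exact hdisj _ _ (hsc k) (s k) (t k)
        ((Option.some.inj h1).symm.trans (Option.some.inj h2))
  -- the pieces
  set f : Fin n → List V := fun k =>
    if k.val = 0 then p k else (Q k).tail ++ (p k).tail with hf_def
  set g : ℕ → List V := fun k => if h : k < n then f ⟨k, h⟩ else [] with hg_def
  have hg : ∀ (k : ℕ) (h : k < n), g k = f ⟨k, h⟩ := fun k h => dif_pos h
  -- the partial-staircase induction
  have key : ∀ m : ℕ, ∀ hm1 : 1 ≤ m, ∀ hm : m ≤ n,
      (((List.range m).map g).flatten ≠ [] ∧
       ((List.range m).map g).flatten.Nodup ∧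
       List.Chain' D.Adj ((List.range m).map g).flatten) ∧
      ((List.range m).map g).flatten.getLast? =
        some (R (seq (⟨m - 1, by omega⟩ : Fin n).succ) (t ⟨m - 1, by omega⟩)) ∧
      (∀ v ∈ ((List.range m).map g).flatten,
        ∃ j : Fin n, j.val < m ∧ (v ∈ p j ∨ (1 ≤ j.val ∧ v ∈ (Q j).tail))) := by
    intro m hm1
    induction m, hm1 using Nat.le_induction with
    | base =>
      intro hm
      have h0n : 0 < n := hm
      have e : ((List.range 1).map g).flatten = p ⟨0, h0n⟩ := by
        rw [show List.range 1 = [0] from rfl, List.map_singleton, hg 0 h0n]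
        simp [hf_def]
      rw [e]
      obtain ⟨h1, h2, h3⟩ := hPdi ⟨0, h0n⟩
      exact ⟨⟨h1, h2, h3⟩, hPlast ⟨0, h0n⟩,
        fun v hv => ⟨⟨0, h0n⟩, Nat.zero_lt_one, Or.inl hv⟩⟩
    | succ m hm1 ih =>
      intro hm
      obtain ⟨⟨hne, hnd, hch⟩, hlast, hmem⟩ := ih (by omega)
      have e : ((List.range (m + 1)).map g).flatten =
          ((List.range m).map g).flatten ++ g m := by
        rw [List.range_succ, List.map_append, List.flatten_append, List.map_singleton]
        simp
      have hmn : m < n := hm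
      set km : Fin n := ⟨m, hmn⟩ with hkm_def
      set kp : Fin n := ⟨m - 1, by omega⟩ with hkp_def
      have hkmval : km.val = m := rfl
      have hkpval : kp.val = m - 1 := rfl
      have hkm1 : 1 ≤ km.val := hm1
      have hgm : g m = (Q km).tail ++ (p km).tail := by
        rw [hg m hmn, hf_def]
        exact if_neg (by omega)
      have hQm : Q km = seg (R (seq km.castSucc)) (t kp) (s km) := hQeq km hkm1
      have htskm : t kp < s km := hts km hkm1
      have hQtail : (Q km).tail = seg (R (seq km.castSucc)) (t kp + 1) (s km) := by
        rw [hQm, seg_tail htskm]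
      have hQtmem : ∀ v ∈ (Q km).tail, ∃ m', t kp + 1 ≤ m' ∧ m' ≤ s km ∧
          v = R (seq km.castSucc) m' := by
        intro v hv
        rw [hQtail] at hv
        exact mem_seg (by omega) hv
      have hheadcons : R (seq km.castSucc) (s km) :: (p km).tail = p km :=
        List.cons_head?_tail (by rw [hPhead km]; exact rfl)
      have hheadnotin : R (seq km.castSucc) (s km) ∉ (p km).tail := by
        have := (hPdi km).2.1
        rw [← hheadcons] at this
        exact (List.nodup_cons.1 this).1
      have hdisjoint : ∀ v ∈ ((List.range m).map g).flatten, v ∉ g m := by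
        intro v hvL hvg
        obtain ⟨j, hjm, hj⟩ := hmem v hvL
        rw [hgm] at hvg
        rcases List.mem_append.1 hvg with hvq | hvp
        · rcases hj with hj | ⟨hj1, hj2⟩
          · rcases hPQ j km hkm1 v hj (List.mem_of_mem_tail hvq) with
              ⟨hjk, _⟩ | ⟨hjv, hveq⟩
            · rw [hjk] at hjm
              omega
            · obtain ⟨m', hm'1, hm'2, hveq'⟩ := hQtmem v hvq
              rw [hveq'] at hveq
              have h5 := hRinj _ hveq
              have h6 : t ⟨(km : ℕ) - 1, lt_of_le_of_lt (Nat.sub_le _ _) km.isLt⟩ = t kp :=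
                congrArg t (Fin.ext rfl)
              rw [h6] at h5
              omega
          · exact hQQ j km (fun h => by rw [h] at hjm; omega)
              hj1 hkm1 v (List.mem_of_mem_tail hj2) (List.mem_of_mem_tail hvq)
        · rcases hj with hj | ⟨hj1, hj2⟩
          · exact H2 j km (fun h => by rw [h] at hjm; omega)
              v hj (List.mem_of_mem_tail hvp)
          · rcases hPQ km j hj1 v (List.mem_of_mem_tail hvp)
              (List.mem_of_mem_tail hj2) with ⟨hjk, _⟩ | ⟨hjv, _⟩
            · rw [← hjk] at hjm
              omega
            · omega
      refine ⟨⟨?_, ?_, ?_⟩, ?_, ?_⟩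
      · rw [e]
        intro hcontra
        exact hne (List.append_eq_nil_iff.1 hcontra).1
      · rw [e, List.nodup_append]
        refine ⟨hnd, ?_, fun v hv w hw hvw => hdisjoint v hv (hvw ▸ hw)⟩
        rw [hgm, List.nodup_append]
        refine ⟨by rw [hQtail]; exact seg_nodup (hRinj _) _ _,
          ((p km).tail_sublist).nodup (hPdi km).2.1, ?_⟩
        intro v hvq w hvp hvw
        subst hvw
        rcases hPQ km km hkm1 v (List.mem_of_mem_tail hvp)
          (List.mem_of_mem_tail hvq) with ⟨_, hveq⟩ | ⟨hcontra, _⟩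
        · rw [hveq] at hvp
          exact hheadnotin hvp
        · omega
      · unfold List.Chain'
        rw [e, List.isChain_append]
        refine ⟨hch, ?_, ?_⟩
        · rw [hgm, List.isChain_append]
          refine ⟨by rw [hQtail]; exact seg_chain' (hray _).2 _ _,
            List.IsChain.tail (hPdi km).2.2, ?_⟩
          intro x hx y hy
          rw [Option.mem_def, hQtail, seg_getLast? (by omega)] at hx
          have hxv : x = R (seq km.castSucc) (s km) := (Option.some.inj hx).symm
          subst hxv
          have hch2 := (hPdi km).2.2
          rw [← hheadcons] at hch2
          have hycons : y :: (p km).tail.tail = (p km).tail := List.cons_head?_tail hy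
          rw [← hycons] at hch2
          exact (List.isChain_cons_cons.1 hch2).1
        · intro x hx y hy
          rw [Option.mem_def, hlast] at hx
          have hxv : x = R (seq kp.succ) (t kp) := (Option.some.inj hx).symm
          subst hxv
          rw [Option.mem_def, hgm, List.head?_append, hQtail, seg_head?] at hy
          have hy' : (some (R (seq km.castSucc) (t kp + 1))).or (p km).tail.head?
              = some y := hy
          rw [show (some (R (seq km.castSucc) (t kp + 1))).or (p km).tail.head?
              = some (R (seq km.castSucc) (t kp + 1)) from rfl] at hy'
          have hyv : y = R (seq km.castSucc) (t kp + 1) := (Option.some.inj hy').symm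
          subst hyv
          have hsq : kp.succ = km.castSucc :=
            Fin.ext (by rw [Fin.val_succ, Fin.coe_castSucc, hkpval, hkmval]; omega)
          rw [hsq]
          exact hRadj _ _
      · rw [e, List.getLast?_append, hgm, List.getLast?_append,
          getLast?_tail_of_ne (hPtail_ne km), hPlast km]
        rfl
      · rw [e]
        intro v hv
        rcases List.mem_append.1 hv with hv | hv
        · obtain ⟨j, hjm, hj⟩ := hmem v hv
          exact ⟨j, by omega, hj⟩
        · rw [hgm] at hv
          rcases List.mem_append.1 hv with hv | hv
          · exact ⟨km, by omega, Or.inr ⟨hkm1, hv⟩⟩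
          · exact ⟨km, by omega, Or.inl (List.mem_of_mem_tail hv)⟩
  -- assemble the staircase
  have hLg : (List.ofFn f).flatten = ((List.range n).map g).flatten := by
    rw [List.ofFn_eq_map, ← (show (List.finRange n).map Fin.val = List.range n from List.ext_getElem (by simp) (by simp)), List.map_map]
    congr 1
    refine List.map_congr_left fun k _ => ?_
    rw [Function.comp_apply, hg k.val k.isLt]
  obtain ⟨⟨hLne, hLnd, hLch⟩, _, hLmem⟩ := key n hn le_rfl
  rw [← hLg] at hLne hLnd hLch hLmem
  refine ⟨(List.ofFn f).flatten, ⟨p, Q, ?_, ?_, ?_, rfl, hLne, hLnd, hLch⟩, ?_⟩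
  · intro k
    exact ⟨hPdi k, ⟨R (seq k.castSucc) (s k), Set.mem_range_self _, hPhead k⟩,
      ⟨R (seq k.succ) (t k), Set.mem_range_self _, hPlast k⟩, hPint k⟩
  · intro k hk
    exact ⟨t ⟨k.val - 1, lt_of_le_of_lt (Nat.sub_le _ _) k.isLt⟩, s k, hts k hk, hQeq k hk⟩
  · intro k hk
    constructor
    · rw [hPlast, hQeq k hk, seg_head?]
      have hix : (⟨k.val - 1, lt_of_le_of_lt (Nat.sub_le _ _) k.isLt⟩ : Fin n).succ
          = k.castSucc := Fin.ext (show k.val - 1 + 1 = k.val by omega)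
      rw [hix]
    · rw [hQeq k hk, seg_getLast? (le_of_lt (hts k hk)), hPhead k]
  · intro v hv
    obtain ⟨j, _, hj | ⟨hj1, hj2⟩⟩ := hLmem v hv
    · exact hPX j v hj
    · exact hQX j hj1 v (List.mem_of_mem_tail hj2)
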